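/- Let f⁽¹⁾, f⁽²⁾ ∈ ℝ₊ᴺ with equal weighted masses and η(f⁽²⁾) < η(f⁽¹⁾). If fᵢ⁽¹⁾ ≥ C₀ > 0 for all i (C₀ ≤ 1), then η(f⁽¹⁾) − η(f⁽²⁾) ≤ max(2, 2|log C₀|) · ‖f⁽¹⁾ − f⁽²⁾‖₂ · (‖f⁽¹⁾ − 1‖₂ + ‖f⁽²⁾ − 1‖₂). -/

import Mathlib

open Real Finset

/-- Weighted Cauchy–Schwarz for nonnegative sequences. -/
lemma weighted_cs (N : ℕ) (Δv a b : Fin N → ℝ) (hΔv : ∀ i, 0 < Δv i)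
    (ha : ∀ i, 0 ≤ a i) (hb : ∀ i, 0 ≤ b i) :
    (∑ i, a i * b i * Δv i) ≤
      Real.sqrt (∑ i, a i ^ 2 * Δv i) * Real.sqrt (∑ i, b i ^ 2 * Δv i) := by
  have key := Finset.sum_mul_sq_le_sq_mul_sq Finset.univ
    (fun i => a i * Real.sqrt (Δv i)) (fun i => b i * Real.sqrt (Δv i))
  have h1 : ∀ i : Fin N, (a i * Real.sqrt (Δv i)) * (b i * Real.sqrt (Δv i))
      = a i * b i * Δv i := by
    intro i
    have : Real.sqrt (Δv i) * Real.sqrt (Δv i) = Δv i :=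
      Real.mul_self_sqrt (hΔv i).le
    ring_nf
    rw [Real.sq_sqrt (hΔv i).le]; ring
  have h2 : ∀ (c : Fin N → ℝ) (i : Fin N),
      (c i * Real.sqrt (Δv i)) ^ 2 = c i ^ 2 * Δv i := by
    intro c i
    rw [mul_pow, Real.sq_sqrt (hΔv i).le]
  simp only [h1, h2] at key
  have hnn : 0 ≤ ∑ i, a i * b i * Δv i :=
    Finset.sum_nonneg fun i _ => mul_nonneg (mul_nonneg (ha i) (hb i)) (hΔv i).le
  have := Real.sqrt_le_sqrt key
  rwa [Real.sqrt_sq hnn, Real.sqrt_mul (Finset.sum_nonneg fun i _ =>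
    mul_nonneg (sq_nonneg _) (hΔv i).le)] at this

/-- Convexity estimate: `g(x) - g(y) ≤ log x * (x - y)` where `g t = t log t - t + 1`. -/
lemma entropy_pointwise_convex (x y : ℝ) (hx : 0 < x) (hy : 0 ≤ y) :
    x * Real.log x - y * Real.log y - (x - y) ≤ Real.log x * (x - y) := by
  rcases eq_or_lt_of_le hy with rfl | hy
  · simp [Real.log_zero]; nlinarith
  · -- reduces to y * log (y/x) ≥ y - x, i.e. log (x/y) ≤ x/y - 1
    have hlog := Real.log_le_sub_one_of_pos (show 0 < x / y by positivity)
    have hxy : Real.log (x / y) = Real.log x - Real.log y := Real.log_div hx.ne' hy.ne'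
    rw [hxy] at hlog
    have : y * (Real.log x - Real.log y) ≤ y * (x / y - 1) :=
      mul_le_mul_of_nonneg_left hlog hy.le
    have hyd : y * (x / y - 1) = x - y := by field_simp
    nlinarith [this]

/-- `|log x| ≤ max 2 (2|log C₀|) * |x - 1|` for `x ≥ C₀`, `0 < C₀ ≤ 1`. -/
lemma abs_log_le (C₀ x : ℝ) (hC₀ : 0 < C₀) (hC₀' : C₀ ≤ 1) (hx : C₀ ≤ x) :
    |Real.log x| ≤ max 2 (2 * |Real.log C₀|) * |x - 1| := by
  set M := max 2 (2 * |Real.log C₀|) with hM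
  have hM2 : (2:ℝ) ≤ M := le_max_left _ _
  have hxpos : 0 < x := lt_of_lt_of_le hC₀ hx
  rcases le_or_gt 1 x with h1 | h1
  · -- x ≥ 1 : 0 ≤ log x ≤ x - 1
    have hl : Real.log x ≤ x - 1 := Real.log_le_sub_one_of_pos hxpos
    have hl0 : 0 ≤ Real.log x := Real.log_nonneg h1
    rw [abs_of_nonneg hl0, abs_of_nonneg (by linarith)]
    nlinarith
  · -- x < 1 : |log x| = -log x
    have hl0 : Real.log x ≤ 0 := Real.log_nonpos hxpos.le h1.le
    rw [abs_of_nonpos hl0, abs_of_nonpos (by linarith)]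
    rcases le_or_gt (1/2 : ℝ) x with h2 | h2
    · -- log(1/x) ≤ (1-x)/x ≤ 2(1-x)
      have hinv : Real.log x⁻¹ ≤ x⁻¹ - 1 := Real.log_le_sub_one_of_pos (by positivity)
      rw [Real.log_inv] at hinv
      have hxi : x⁻¹ - 1 ≤ 2 * (1 - x) := by
        rw [inv_eq_one_div]
        rw [div_sub' hxpos.ne', div_le_iff₀ hxpos]
        nlinarith
      calc -Real.log x ≤ 2 * (1 - x) := le_trans hinv hxi
        _ ≤ M * (1 - x) := by nlinarith
        _ = M * -(x - 1) := by ring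
    · -- x < 1/2 : -log x ≤ |log C₀| ≤ M/2 ≤ M(1-x)
      have hlc : -Real.log x ≤ -Real.log C₀ := by
        have := Real.log_le_log hC₀ hx
        linarith
      have hC0l : Real.log C₀ ≤ 0 := Real.log_nonpos hC₀.le hC₀'
      have habs : -Real.log C₀ = |Real.log C₀| := (abs_of_nonpos hC0l).symm
      have hMc : 2 * |Real.log C₀| ≤ M := le_max_right _ _
      have hMpos : 0 < M := lt_of_lt_of_le two_pos hM2
      calc -Real.log x ≤ |Real.log C₀| := by rw [← habs]; exact hlc
        _ ≤ M / 2 := by linarith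
        _ ≤ M * (1 - x) := by nlinarith
        _ = M * -(x - 1) := by ring

/-- One-sided entropy difference estimate when only `f1` is bounded below. -/
theorem entropy_diff_estimate_one_sided
    (N : ℕ) (Δv f1 f2 : Fin N → ℝ) (C₀ : ℝ)
    (hΔv : ∀ i, 0 < Δv i) (hC₀ : 0 < C₀) (hC₀' : C₀ ≤ 1)
    (hf1 : ∀ i, C₀ ≤ f1 i) (hf2 : ∀ i, 0 ≤ f2 i)
    (hmass : (∑ i, f1 i * Δv i) = ∑ i, f2 i * Δv i)
    (hη : (∑ i, f2 i * Real.log (f2 i) * Δv i) < ∑ i, f1 i * Real.log (f1 i) * Δv i) :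
    (∑ i, f1 i * Real.log (f1 i) * Δv i) - (∑ i, f2 i * Real.log (f2 i) * Δv i) ≤
      max 2 (2 * |Real.log C₀|) *
        Real.sqrt (∑ i, (f1 i - f2 i) ^ 2 * Δv i) *
        (Real.sqrt (∑ i, (f1 i - 1) ^ 2 * Δv i) +
          Real.sqrt (∑ i, (f2 i - 1) ^ 2 * Δv i)) := by
  set M := max 2 (2 * |Real.log C₀|) with hMdef
  have hMpos : (0:ℝ) < M := lt_of_lt_of_le two_pos (le_max_left _ _)
  -- pointwise bound
  have hpt : ∀ i, (f1 i * Real.log (f1 i) - f2 i * Real.log (f2 i)) - (f1 i - f2 i)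
      ≤ M * (|f1 i - f2 i| * (|f1 i - 1| + |f2 i - 1|)) := by
    intro i
    have hx : 0 < f1 i := lt_of_lt_of_le hC₀ (hf1 i)
    have h1 := entropy_pointwise_convex (f1 i) (f2 i) hx (hf2 i)
    have h2 : Real.log (f1 i) * (f1 i - f2 i) ≤ |Real.log (f1 i)| * |f1 i - f2 i| := by
      calc Real.log (f1 i) * (f1 i - f2 i) ≤ |Real.log (f1 i) * (f1 i - f2 i)| := le_abs_self _
        _ = |Real.log (f1 i)| * |f1 i - f2 i| := abs_mul _ _
    have h3 := abs_log_le C₀ (f1 i) hC₀ hC₀' (hf1 i)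
    have h4 : |Real.log (f1 i)| * |f1 i - f2 i| ≤ M * |f1 i - 1| * |f1 i - f2 i| :=
      mul_le_mul_of_nonneg_right h3 (abs_nonneg _)
    have h5 : M * |f1 i - 1| * |f1 i - f2 i| ≤ M * (|f1 i - f2 i| * (|f1 i - 1| + |f2 i - 1|)) := by
      nlinarith [mul_nonneg (mul_nonneg hMpos.le (abs_nonneg (f1 i - f2 i))) (abs_nonneg (f2 i - 1))]
    linarith
  -- sum manipulation
  have hzero : (∑ i, (f1 i - f2 i) * Δv i) = 0 := by
    rw [show (∑ i, (f1 i - f2 i) * Δv i)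
        = (∑ i, f1 i * Δv i) - ∑ i, f2 i * Δv i by
      rw [← Finset.sum_sub_distrib]; congr 1; ext i; ring]
    linarith
  have hsum : (∑ i, f1 i * Real.log (f1 i) * Δv i) - (∑ i, f2 i * Real.log (f2 i) * Δv i)
      = ∑ i, ((f1 i * Real.log (f1 i) - f2 i * Real.log (f2 i)) - (f1 i - f2 i)) * Δv i := by
    rw [Finset.sum_congr rfl (fun i _ => by
      ring_nf : ∀ i ∈ Finset.univ,
        ((f1 i * Real.log (f1 i) - f2 i * Real.log (f2 i)) - (f1 i - f2 i)) * Δv i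
        = f1 i * Real.log (f1 i) * Δv i - f2 i * Real.log (f2 i) * Δv i
          - (f1 i - f2 i) * Δv i)]
    rw [Finset.sum_sub_distrib, Finset.sum_sub_distrib, hzero]
    ring
  rw [hsum]
  have step1 : (∑ i, ((f1 i * Real.log (f1 i) - f2 i * Real.log (f2 i)) - (f1 i - f2 i)) * Δv i)
      ≤ ∑ i, M * (|f1 i - f2 i| * (|f1 i - 1| + |f2 i - 1|)) * Δv i :=
    Finset.sum_le_sum fun i _ => mul_le_mul_of_nonneg_right (hpt i) (hΔv i).le
  have cs1 := weighted_cs N Δv (fun i => |f1 i - f2 i|) (fun i => |f1 i - 1|) hΔv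
    (fun i => abs_nonneg _) (fun i => abs_nonneg _)
  have cs2 := weighted_cs N Δv (fun i => |f1 i - f2 i|) (fun i => |f2 i - 1|) hΔv
    (fun i => abs_nonneg _) (fun i => abs_nonneg _)
  simp only [sq_abs] at cs1 cs2
  have step2 : (∑ i, M * (|f1 i - f2 i| * (|f1 i - 1| + |f2 i - 1|)) * Δv i)
      = M * ((∑ i, |f1 i - f2 i| * |f1 i - 1| * Δv i)
          + ∑ i, |f1 i - f2 i| * |f2 i - 1| * Δv i) := by
    rw [← Finset.sum_add_distrib, Finset.mul_sum]
    congr 1; ext i; ring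
  calc (∑ i, ((f1 i * Real.log (f1 i) - f2 i * Real.log (f2 i)) - (f1 i - f2 i)) * Δv i)
      ≤ M * ((∑ i, |f1 i - f2 i| * |f1 i - 1| * Δv i)
          + ∑ i, |f1 i - f2 i| * |f2 i - 1| * Δv i) := by rw [← step2]; exact step1
    _ ≤ M * (Real.sqrt (∑ i, (f1 i - f2 i) ^ 2 * Δv i)
            * Real.sqrt (∑ i, (f1 i - 1) ^ 2 * Δv i)
          + Real.sqrt (∑ i, (f1 i - f2 i) ^ 2 * Δv i)
            * Real.sqrt (∑ i, (f2 i - 1) ^ 2 * Δv i)) := by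
        apply mul_le_mul_of_nonneg_left _ hMpos.le
        exact add_le_add cs1 cs2
    _ = M * Real.sqrt (∑ i, (f1 i - f2 i) ^ 2 * Δv i) *
        (Real.sqrt (∑ i, (f1 i - 1) ^ 2 * Δv i) +
          Real.sqrt (∑ i, (f2 i - 1) ^ 2 * Δv i)) := by ring
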